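/- (Birkhoff contraction) Let C₁, C₂ be closed convex cones in Banach spaces E₁, E₂ with projective metrics Θ₁, Θ₂, and let L: E₁ → E₂ be linear with L(C₁) ⊂ C₂. If Δ = diam_{Θ₂}(L(C₁)) < ∞, then Θ₂(L(v), L(w)) ≤ (1 − e^{−Δ})·Θ₁(v,w) for all v, w ∈ C₁. -/

import Mathlib

open scoped ENNReal

/-- A cone in `E` (a subset of `E ∖ {0}` with `C ∩ (−C) = ∅` closed under positive scaling). -/
def IsCone {E : Type*} [NormedAddCommGroup E] [NormedSpace ℝ E] (C : Set E) : Prop :=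
  (0 : E) ∉ C ∧ (∀ v ∈ C, ∀ t : ℝ, 0 < t → t • v ∈ C) ∧ ∀ v ∈ C, -v ∉ C

/-- A convex cone. -/
def IsConvexCone {E : Type*} [NormedAddCommGroup E] [NormedSpace ℝ E] (C : Set E) : Prop :=
  IsCone C ∧ ∀ v ∈ C, ∀ w ∈ C, ∀ s t : ℝ, 0 < s → 0 < t → s • v + t • w ∈ C

/-- A closed cone: its closure (in the sense of limits `w + λₙ • v ∈ C`, `λₙ → 0`)
equals `C ∪ {0}`. -/
def IsClosedCone {E : Type*} [NormedAddCommGroup E] [NormedSpace ℝ E] (C : Set E) : Prop :=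
  ∀ w v : E, v ∈ C → ∀ l : ℕ → ℝ, Filter.Tendsto l Filter.atTop (nhds 0) →
    (∀ n, w + l n • v ∈ C) → w ∈ C ∨ w = 0

/-- `A(v,w) = sup{t>0 : w − t•v ∈ C}` (with `sup ∅ = 0`). -/
noncomputable def coneA {E : Type*} [NormedAddCommGroup E] [NormedSpace ℝ E]
    (C : Set E) (v w : E) : ℝ :=
  sSup {t : ℝ | 0 < t ∧ w - t • v ∈ C}

/-- `B(v,w) = inf{s>0 : s•v − w ∈ C}` (as a real number, when the set is nonempty). -/
noncomputable def coneB {E : Type*} [NormedAddCommGroup E] [NormedSpace ℝ E]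
    (C : Set E) (v w : E) : ℝ :=
  sInf {s : ℝ | 0 < s ∧ s • v - w ∈ C}

open scoped Classical in
/-- The projective (pseudo-)metric `Θ(v,w) = log (B(v,w)/A(v,w)) ∈ [0,+∞]` of a cone,
with the conventions `sup ∅ = 0`, `inf ∅ = +∞`, `log(+∞/a) = +∞`, `log(b/0) = +∞`. -/
noncomputable def projMetric {E : Type*} [NormedAddCommGroup E] [NormedSpace ℝ E]
    (C : Set E) (v w : E) : ℝ≥0∞ :=
  if {t : ℝ | 0 < t ∧ w - t • v ∈ C}.Nonempty ∧ {s : ℝ | 0 < s ∧ s • v - w ∈ C}.Nonempty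
  then ENNReal.ofReal (Real.log (coneB C v w / coneA C v w))
  else ⊤

section auxiliary

variable {E : Type*} [NormedAddCommGroup E] [NormedSpace ℝ E] {C : Set E}

lemma sigDeriv (D y : ℝ) :
    HasDerivAt (fun y : ℝ => Real.log (1 + Real.exp (y + D)) - Real.log (1 + Real.exp y))
      (Real.exp (y + D) / (1 + Real.exp (y + D)) - Real.exp y / (1 + Real.exp y)) y := by
  have h1 : HasDerivAt (fun y : ℝ => y + D) 1 y := (hasDerivAt_id y).add_const D
  have h2 : HasDerivAt (fun y : ℝ => Real.exp (y + D)) (Real.exp (y + D)) y := by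
    simpa using h1.exp
  have h3 : HasDerivAt (fun y : ℝ => 1 + Real.exp (y + D)) (Real.exp (y + D)) y :=
    h2.const_add 1
  have h4 : HasDerivAt (fun y : ℝ => 1 + Real.exp y) (Real.exp y) y :=
    (Real.hasDerivAt_exp y).const_add 1
  have p1 : (1 : ℝ) + Real.exp (y + D) ≠ 0 := by positivity
  have p2 : (1 : ℝ) + Real.exp y ≠ 0 := by positivity
  exact (h3.log p1).sub (h4.log p2)

lemma sigBound {D : ℝ} (hD : 0 ≤ D) (y : ℝ) :
    |Real.exp (y + D) / (1 + Real.exp (y + D)) - Real.exp y / (1 + Real.exp y)|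
      ≤ 1 - Real.exp (-D) := by
  have hp : (0:ℝ) < Real.exp y := Real.exp_pos y
  have hq : (1:ℝ) ≤ Real.exp D := Real.one_le_exp hD
  have hq0 : (0:ℝ) < Real.exp D := Real.exp_pos D
  have hyD : Real.exp (y + D) = Real.exp y * Real.exp D := Real.exp_add y D
  have h1 : (0:ℝ) < 1 + Real.exp y := by positivity
  have h2 : (0:ℝ) < 1 + Real.exp (y + D) := by positivity
  have key : Real.exp (y + D) / (1 + Real.exp (y + D)) - Real.exp y / (1 + Real.exp y)
      = (Real.exp y * (Real.exp D - 1)) / ((1 + Real.exp (y + D)) * (1 + Real.exp y)) := by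
    field_simp
    rw [hyD]; ring
  have hnn : (0:ℝ) ≤ (Real.exp y * (Real.exp D - 1)) / ((1 + Real.exp (y + D)) * (1 + Real.exp y)) :=
    div_nonneg (mul_nonneg hp.le (by linarith)) (by positivity)
  rw [key, abs_of_nonneg hnn, Real.exp_neg, div_le_iff₀ (by positivity)]
  have hinv : Real.exp D * (Real.exp D)⁻¹ = 1 := mul_inv_cancel₀ hq0.ne'
  rw [hyD]
  have h9 : (0:ℝ) ≤ (Real.exp D - 1) * (Real.exp D)⁻¹ * (1 + Real.exp y + Real.exp y * Real.exp y * Real.exp D) :=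
    mul_nonneg (mul_nonneg (by linarith) (by positivity)) (by positivity)
  have heq : (1 - (Real.exp D)⁻¹) * ((1 + Real.exp y * Real.exp D) * (1 + Real.exp y))
      = (Real.exp D - 1) * (Real.exp D)⁻¹ * (1 + Real.exp y + Real.exp y * Real.exp D + Real.exp y * Real.exp y * Real.exp D) := by
    linear_combination (-(1 + Real.exp y + Real.exp y * Real.exp D + Real.exp y * Real.exp y * Real.exp D)) * hinv
  rw [heq]
  nlinarith [h9, hinv]

lemma Glip {D : ℝ} (hD : 0 ≤ D) {x y : ℝ} :
    |(Real.log (1 + Real.exp (x + D)) - Real.log (1 + Real.exp x))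
      - (Real.log (1 + Real.exp (y + D)) - Real.log (1 + Real.exp y))|
      ≤ (1 - Real.exp (-D)) * |x - y| := by
  have := convex_univ.norm_image_sub_le_of_norm_deriv_le
    (f := fun y : ℝ => Real.log (1 + Real.exp (y + D)) - Real.log (1 + Real.exp y))
    (fun z _ => (sigDeriv D z).differentiableAt)
    (fun z _ => by
      rw [(sigDeriv D z).deriv, Real.norm_eq_abs]
      exact sigBound hD z)
    (Set.mem_univ y) (Set.mem_univ x)
  simpa [Real.norm_eq_abs] using this

lemma key_alg {t s u u' : ℝ} (ht : 0 < t) (hts : t ≤ s) (hu : 0 < u) (huu' : u ≤ u') :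
    (Real.log (s + u * t) - Real.log (1 + u)) - (Real.log (s + u' * t) - Real.log (1 + u'))
      ≤ (1 - u / u') * (Real.log s - Real.log t) := by
  have hs : (0:ℝ) < s := lt_of_lt_of_le ht hts
  have hu' : (0:ℝ) < u' := lt_of_lt_of_le hu huu'
  set D : ℝ := Real.log u' - Real.log u with hDdef
  set L : ℝ := Real.log s - Real.log t with hLdef
  set x : ℝ := Real.log u with hxdef
  have hD : 0 ≤ D := sub_nonneg.2 (Real.log_le_log hu huu')
  have hL : 0 ≤ L := sub_nonneg.2 (Real.log_le_log ht hts)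
  have e1 : Real.exp (x + D) = u' := by
    rw [hxdef, hDdef]; rw [show Real.log u + (Real.log u' - Real.log u) = Real.log u' by ring,
      Real.exp_log hu']
  have e2 : Real.exp x = u := Real.exp_log hu
  have e3 : Real.exp (x - L) = u * t / s := by
    rw [hxdef, hLdef, show Real.log u - (Real.log s - Real.log t) = Real.log u + Real.log t - Real.log s by ring,
      Real.exp_sub, Real.exp_add, Real.exp_log hu, Real.exp_log ht, Real.exp_log hs]
  have e4 : Real.exp (x - L + D) = u' * t / s := by
    rw [show x - L + D = x + D - L by ring, Real.exp_sub, e1, hLdef, Real.exp_sub,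
      Real.exp_log hs, Real.exp_log ht]
    field_simp
  have eD : Real.exp (-D) = u / u' := by
    rw [hDdef, neg_sub, Real.exp_sub, Real.exp_log hu, Real.exp_log hu']
  have l1 : Real.log (1 + u' * t / s) = Real.log (s + u' * t) - Real.log s := by
    rw [show (1:ℝ) + u' * t / s = (s + u' * t) / s by field_simp, Real.log_div (by positivity) hs.ne']
  have l2 : Real.log (1 + u * t / s) = Real.log (s + u * t) - Real.log s := by
    rw [show (1:ℝ) + u * t / s = (s + u * t) / s by field_simp, Real.log_div (by positivity) hs.ne']
  have main := Glip hD (x := x) (y := x - L)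
  rw [e1, e2, e3, e4, l1, l2] at main
  have habs : |x - (x - L)| = L := by rw [show x - (x - L) = L by ring, abs_of_nonneg hL]
  rw [habs, eD] at main
  calc (Real.log (s + u * t) - Real.log (1 + u)) - (Real.log (s + u' * t) - Real.log (1 + u'))
      ≤ |(Real.log (1 + u') - Real.log (1 + u)) -
          ((Real.log (s + u' * t) - Real.log s) - (Real.log (s + u * t) - Real.log s))| := by
        exact le_trans (le_of_eq (by ring)) (le_abs_self _)
    _ ≤ (1 - u / u') * L := main

lemma cone_add (hC : IsConvexCone C) {v w : E} (hv : v ∈ C) (hw : w ∈ C) : v + w ∈ C := by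
  simpa using hC.2 v hv w hw 1 1 one_pos one_pos

lemma cone_cross (hC : IsConvexCone C) {v w : E} (hv : v ∈ C) {t s : ℝ}
    (ht : 0 < t) (hs : 0 < s) (h1 : w - t • v ∈ C) (h2 : s • v - w ∈ C) : t < s := by
  by_contra h
  push_neg at h
  have hsum : (s - t) • v ∈ C := by
    have h3 := cone_add hC h1 h2
    have e : (w - t • v) + (s • v - w) = (s - t) • v := by rw [sub_smul]; abel
    rwa [e] at h3
  rcases eq_or_lt_of_le h with heq | hlt
  · rw [heq, sub_self, zero_smul] at hsum
    exact hC.1.1 hsum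
  · have h3 : (t - s) • v ∈ C := hC.1.2.1 v hv (t - s) (by linarith)
    exact hC.1.2.2 _ h3
      (by rw [show -((t - s) • v) = (s - t) • v from by rw [← neg_smul, neg_sub]]; exact hsum)

lemma cone_bddBelowB (C : Set E) (v w : E) : BddBelow {s : ℝ | 0 < s ∧ s • v - w ∈ C} :=
  ⟨0, fun _ hx => hx.1.le⟩

lemma cone_bddAboveA (hC : IsConvexCone C) {v w : E} (hv : v ∈ C) {s₀ : ℝ}
    (hs₀ : s₀ ∈ {s : ℝ | 0 < s ∧ s • v - w ∈ C}) :
    BddAbove {t : ℝ | 0 < t ∧ w - t • v ∈ C} :=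
  ⟨s₀, fun _ hx => (cone_cross hC hv hx.1 hs₀.1 hx.2 hs₀.2).le⟩

lemma cone_AB (hC : IsConvexCone C) {v w : E} (hv : v ∈ C)
    (hA : {t : ℝ | 0 < t ∧ w - t • v ∈ C}.Nonempty)
    (hB : {s : ℝ | 0 < s ∧ s • v - w ∈ C}.Nonempty) :
    0 < coneA C v w ∧ coneA C v w ≤ coneB C v w := by
  obtain ⟨t₀, ht₀⟩ := hA
  obtain ⟨s₀, hs₀⟩ := hB
  refine ⟨lt_of_lt_of_le ht₀.1 (le_csSup (cone_bddAboveA hC hv hs₀) ht₀), ?_⟩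
  exact csSup_le ⟨t₀, ht₀⟩ fun x hx =>
    le_csInf ⟨s₀, hs₀⟩ fun y hy => (cone_cross hC hv hx.1 hy.1 hx.2 hy.2).le

end auxiliary
section wrappers
variable {E : Type*} [NormedAddCommGroup E] [NormedSpace ℝ E] {C : Set E} {v w : E} {a b : ℝ}

lemma exists_lt_coneA (hne : {t : ℝ | 0 < t ∧ w - t • v ∈ C}.Nonempty)
    (hb : b < coneA C v w) : ∃ a ∈ {t : ℝ | 0 < t ∧ w - t • v ∈ C}, b < a :=
  exists_lt_of_lt_csSup hne hb

lemma coneB_exists_lt (hne : {s : ℝ | 0 < s ∧ s • v - w ∈ C}.Nonempty)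
    (hb : coneB C v w < b) : ∃ a ∈ {s : ℝ | 0 < s ∧ s • v - w ∈ C}, a < b :=
  exists_lt_of_csInf_lt hne hb

lemma le_coneA (hbdd : BddAbove {t : ℝ | 0 < t ∧ w - t • v ∈ C})
    (h : a ∈ {t : ℝ | 0 < t ∧ w - t • v ∈ C}) : a ≤ coneA C v w :=
  le_csSup hbdd h

lemma coneB_le (h : a ∈ {s : ℝ | 0 < s ∧ s • v - w ∈ C}) : coneB C v w ≤ a :=
  csInf_le (cone_bddBelowB C v w) h

end wrappers
set_option maxHeartbeats 1000000 in
/-- Birkhoff contraction: if `L(C₁) ⊆ C₂` and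
`Δ = diam_{Θ₂}(L(C₁)) < ∞`, then `Θ₂(L v, L w) ≤ (1 − e^{−Δ})·Θ₁(v, w)`
for all `v, w ∈ C₁`. -/
theorem stmt7 {E₁ E₂ : Type*} [NormedAddCommGroup E₁] [NormedSpace ℝ E₁]
    [NormedAddCommGroup E₂] [NormedSpace ℝ E₂]
    (C₁ : Set E₁) (C₂ : Set E₂)
    (hC₁ : IsConvexCone C₁) (hC₁c : IsClosedCone C₁)
    (hC₂ : IsConvexCone C₂) (hC₂c : IsClosedCone C₂)
    (L : E₁ →ₗ[ℝ] E₂) (hL : ∀ v ∈ C₁, L v ∈ C₂)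
    (Δ : ℝ≥0∞)
    (hΔ : Δ = ⨆ v ∈ C₁, ⨆ w ∈ C₁, projMetric C₂ (L v) (L w))
    (hΔfin : Δ ≠ ⊤) :
    ∀ v ∈ C₁, ∀ w ∈ C₁,
      projMetric C₂ (L v) (L w) ≤
        ENNReal.ofReal (1 - Real.exp (-Δ.toReal)) * projMetric C₁ v w := by
  intro v hv w hw
  set d : ℝ := Δ.toReal with hddef
  have hd0 : 0 ≤ d := ENNReal.toReal_nonneg
  have hexp1 : Real.exp (-d) ≤ 1 := Real.exp_le_one_iff.mpr (by linarith)
  have hexp0 : 0 < Real.exp (-d) := Real.exp_pos _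
  have hbound : ∀ a ∈ C₁, ∀ b ∈ C₁, projMetric C₂ (L a) (L b) ≤ Δ := by
    intro a ha b hb
    rw [hΔ]
    exact le_iSup₂_of_le a ha
      (le_iSup₂ (f := fun b _ => projMetric C₂ (L a) (L b)) b hb)
  by_cases hne : ({t : ℝ | 0 < t ∧ w - t • v ∈ C₁}.Nonempty ∧
      {s : ℝ | 0 < s ∧ s • v - w ∈ C₁}.Nonempty)
  case neg =>
    have hP1 : projMetric C₁ v w = ⊤ := by rw [projMetric, if_neg hne]
    by_cases hΔ0 : Δ = 0
    · have h0 := hbound v hv w hw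
      rw [hΔ0, le_zero_iff] at h0
      rw [h0]
      exact zero_le
    · have hdpos : 0 < d := ENNReal.toReal_pos hΔ0 hΔfin
      have hlt : Real.exp (-d) < 1 := Real.exp_lt_one_iff.mpr (by linarith)
      rw [hP1, ENNReal.mul_top
        (by simp only [ne_eq, ENNReal.ofReal_eq_zero, not_le]; linarith)]
      exact le_top
  case pos =>
    obtain ⟨hAne, hBne⟩ := hne
    obtain ⟨hApos, hAB⟩ := cone_AB hC₁ hv hAne hBne
    set A : ℝ := coneA C₁ v w with hAdef
    set B : ℝ := coneB C₁ v w with hBdef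
    have hBpos : 0 < B := lt_of_lt_of_le hApos hAB
    set M : ℝ := Real.log B - Real.log A with hMdef
    have hM0 : 0 ≤ M := sub_nonneg.2 (Real.log_le_log hApos hAB)
    have hP1 : projMetric C₁ v w = ENNReal.ofReal M := by
      rw [projMetric, if_pos ⟨hAne, hBne⟩, ← hAdef, ← hBdef,
        Real.log_div hBpos.ne' hApos.ne']
    have construct : ∀ t s : ℝ, (0 < t ∧ w - t • v ∈ C₁) → (0 < s ∧ s • v - w ∈ C₁) →
        ∀ ε₁ : ℝ, 0 < ε₁ → ∃ P Q : ℝ,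
          (0 < P ∧ P • (L v) - L w ∈ C₂) ∧ (0 < Q ∧ L w - Q • (L v) ∈ C₂) ∧
          Real.log P - Real.log Q
            ≤ (1 - Real.exp (-d) + ε₁) * (Real.log s - Real.log t) := by
      intro t s ht hs ε₁ hε₁
      have hx : w - t • v ∈ C₁ := ht.2
      have hy : s • v - w ∈ C₁ := hs.2
      have hts : t < s := cone_cross hC₁ hv ht.1 hs.1 hx hy
      have hLx : L (w - t • v) ∈ C₂ := hL _ hx
      have hLy : L (s • v - w) ∈ C₂ := hL _ hy
      have hθ : projMetric C₂ (L (w - t • v)) (L (s • v - w)) ≤ Δ := hbound _ hx _ hy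
      have hcond : ({τ : ℝ | 0 < τ ∧ L (s • v - w) - τ • L (w - t • v) ∈ C₂}.Nonempty ∧
          {σ : ℝ | 0 < σ ∧ σ • L (w - t • v) - L (s • v - w) ∈ C₂}.Nonempty) := by
        by_contra hc
        rw [projMetric, if_neg hc] at hθ
        exact hΔfin (top_le_iff.mp hθ)
      obtain ⟨hA'ne, hB'ne⟩ := hcond
      obtain ⟨hA'pos, hA'B'⟩ := cone_AB hC₂ hLx hA'ne hB'ne
      set A' : ℝ := coneA C₂ (L (w - t • v)) (L (s • v - w)) with hA'def
      set B' : ℝ := coneB C₂ (L (w - t • v)) (L (s • v - w)) with hB'def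
      have hB'pos : 0 < B' := lt_of_lt_of_le hA'pos hA'B'
      have hlog : Real.log (B' / A') ≤ d := by
        rw [projMetric, if_pos ⟨hA'ne, hB'ne⟩, ← hA'def, ← hB'def] at hθ
        rcases le_or_gt (Real.log (B' / A')) 0 with h | h
        · linarith
        · exact (ENNReal.ofReal_le_iff_le_toReal hΔfin).mp hθ
      have hratio : Real.exp (-d) * B' ≤ A' := by
        have h1 : B' / A' ≤ Real.exp d :=
          (Real.log_le_iff_le_exp (div_pos hB'pos hA'pos)).mp hlog
        have h2 : Real.exp (-d) * Real.exp d = 1 := by rw [← Real.exp_add]; simp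
        have h3 : B' ≤ Real.exp d * A' := by rwa [div_le_iff₀ hA'pos] at h1
        nlinarith [Real.exp_pos (-d)]
      set δ' : ℝ := ε₁ * B' / 2 with hδ'def
      have hδ'pos : 0 < δ' := by positivity
      obtain ⟨u, hu_mem, hu_gt⟩ := exists_lt_coneA hA'ne
        (show A' - δ' < coneA C₂ (L (w - t • v)) (L (s • v - w)) by
          rw [← hA'def]; linarith)
      obtain ⟨u', hu'_mem, hu'_lt⟩ := coneB_exists_lt hB'ne
        (show coneB C₂ (L (w - t • v)) (L (s • v - w)) < B' + δ' by
          rw [← hB'def]; linarith)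
      have hu_pos : 0 < u := hu_mem.1
      have hu'_pos : 0 < u' := hu'_mem.1
      have huA' : u ≤ A' := by
        rw [hA'def]; exact le_coneA (cone_bddAboveA hC₂ hLx hu'_mem) hu_mem
      have hu'B' : B' ≤ u' := by rw [hB'def]; exact coneB_le hu'_mem
      have huu' : u ≤ u' := le_trans huA' (le_trans hA'B' hu'B')
      have hfrac : Real.exp (-d) - ε₁ ≤ u / u' := by
        rcases le_or_gt (Real.exp (-d) - ε₁) 0 with h | h
        · exact le_trans h (by positivity)
        · rw [le_div_iff₀ hu'_pos]
          nlinarith [hu_gt, hu'_lt, hratio]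
      have hPmem : ((s + u * t) / (1 + u)) • (L v) - L w ∈ C₂ := by
        have h1 := hC₂.1.2.1 _ hu_mem.2 (1 / (1 + u)) (by positivity)
        have heq : (1 / (1 + u)) • (L (s • v - w) - u • L (w - t • v))
            = ((s + u * t) / (1 + u)) • (L v) - L w := by
          have h1u : (1 : ℝ) + u ≠ 0 := by positivity
          simp only [map_sub, map_smul]
          match_scalars <;> (field_simp; try ring)
        rwa [heq] at h1
      have hQmem : L w - ((s + u' * t) / (1 + u')) • (L v) ∈ C₂ := by
        have h1 := hC₂.1.2.1 _ hu'_mem.2 (1 / (1 + u')) (by positivity)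
        have heq : (1 / (1 + u')) • (u' • L (w - t • v) - L (s • v - w))
            = L w - ((s + u' * t) / (1 + u')) • (L v) := by
          have h1u : (1 : ℝ) + u' ≠ 0 := by positivity
          simp only [map_sub, map_smul]
          match_scalars <;> (field_simp; try ring)
        rwa [heq] at h1
      have hspos : 0 < s := ht.1.trans hts
      have hsut : 0 < s + u * t := add_pos hspos (mul_pos hu_pos ht.1)
      have hsut' : 0 < s + u' * t := add_pos hspos (mul_pos hu'_pos ht.1)
      have h1upos : 0 < 1 + u := by linarith
      have h1u'pos : 0 < 1 + u' := by linarith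
      refine ⟨(s + u * t) / (1 + u), (s + u' * t) / (1 + u'),
        ⟨div_pos hsut h1upos, hPmem⟩, ⟨div_pos hsut' h1u'pos, hQmem⟩, ?_⟩
      have hkey := key_alg ht.1 hts.le hu_pos huu'
      have hlogP : Real.log ((s + u * t) / (1 + u))
          = Real.log (s + u * t) - Real.log (1 + u) :=
        Real.log_div hsut.ne' h1upos.ne'
      have hlogQ : Real.log ((s + u' * t) / (1 + u'))
          = Real.log (s + u' * t) - Real.log (1 + u') :=
        Real.log_div hsut'.ne' h1u'pos.ne'
      rw [hlogP, hlogQ]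
      have hfactor2 : 0 ≤ Real.log s - Real.log t :=
        sub_nonneg.2 (Real.log_le_log ht.1 hts.le)
      calc (Real.log (s + u * t) - Real.log (1 + u))
            - (Real.log (s + u' * t) - Real.log (1 + u'))
          ≤ (1 - u / u') * (Real.log s - Real.log t) := hkey
        _ ≤ (1 - Real.exp (-d) + ε₁) * (Real.log s - Real.log t) :=
            mul_le_mul_of_nonneg_right (by linarith) hfactor2
    obtain ⟨t₀, ht₀⟩ := hAne
    obtain ⟨s₀, hs₀⟩ := hBne
    obtain ⟨P₀, Q₀, hP₀, hQ₀, -⟩ := construct t₀ s₀ ht₀ hs₀ 1 one_pos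
    have hA₂ne : {τ : ℝ | 0 < τ ∧ L w - τ • L v ∈ C₂}.Nonempty := ⟨Q₀, hQ₀⟩
    have hB₂ne : {σ : ℝ | 0 < σ ∧ σ • L v - L w ∈ C₂}.Nonempty := ⟨P₀, hP₀⟩
    obtain ⟨hA₂pos, hA₂B₂⟩ := cone_AB hC₂ (hL v hv) hA₂ne hB₂ne
    set A₂ : ℝ := coneA C₂ (L v) (L w) with hA₂def
    set B₂ : ℝ := coneB C₂ (L v) (L w) with hB₂def
    have hB₂pos : 0 < B₂ := lt_of_lt_of_le hA₂pos hA₂B₂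
    have hP2 : projMetric C₂ (L v) (L w)
        = ENNReal.ofReal (Real.log B₂ - Real.log A₂) := by
      rw [projMetric, if_pos ⟨hA₂ne, hB₂ne⟩, ← hA₂def, ← hB₂def,
        Real.log_div hB₂pos.ne' hA₂pos.ne']
    have final : ∀ ε : ℝ, 0 < ε →
        Real.log B₂ - Real.log A₂ ≤ (1 - Real.exp (-d)) * M + ε := by
      intro ε hε
      set ε₁ : ℝ := min 1 (ε / (3 * (M + 1))) with hε₁def
      have hε₁pos : 0 < ε₁ := lt_min one_pos (by positivity)
      have hε₁1 : ε₁ ≤ 1 := min_le_left _ _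
      have hε₁le : ε₁ * (M + 1) ≤ ε / 3 := by
        have h1 : ε₁ ≤ ε / (3 * (M + 1)) := min_le_right _ _
        have h2 : ε₁ * (M + 1) ≤ (ε / (3 * (M + 1))) * (M + 1) :=
          mul_le_mul_of_nonneg_right h1 (by linarith)
        have h3 : (ε / (3 * (M + 1))) * (M + 1) = ε / 3 := by
          field_simp
        linarith
      set ε₂ : ℝ := ε / 3 with hε₂def
      have hε₂pos : 0 < ε₂ := by positivity
      set δ₂ : ℝ := min (A / 2) (min (ε₂ * A / 4) (ε₂ * B / 2)) with hδ₂def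
      have hδ₂pos : 0 < δ₂ :=
        lt_min (by positivity) (lt_min (by positivity) (by positivity))
      have hδ₂A : δ₂ ≤ A / 2 := min_le_left _ _
      have hδ₂a : δ₂ ≤ ε₂ * A / 4 := le_trans (min_le_right _ _) (min_le_left _ _)
      have hδ₂b : δ₂ ≤ ε₂ * B / 2 := le_trans (min_le_right _ _) (min_le_right _ _)
      obtain ⟨t, ht_mem, ht_gt⟩ := exists_lt_coneA ⟨t₀, ht₀⟩
        (show A - δ₂ < coneA C₁ v w by rw [← hAdef]; linarith)
      obtain ⟨s, hs_mem, hs_lt⟩ := coneB_exists_lt ⟨s₀, hs₀⟩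
        (show coneB C₁ v w < B + δ₂ by rw [← hBdef]; linarith)
      have htpos : 0 < t := ht_mem.1
      have hspos : 0 < s := hs_mem.1
      have htB : B ≤ s := by rw [hBdef]; exact coneB_le hs_mem
      have htA2 : t ≤ A := by
        rw [hAdef]; exact le_coneA (cone_bddAboveA hC₁ hv hs₀) ht_mem
      have hthalf : A / 2 ≤ t := by linarith
      have hlog1 : Real.log s - Real.log B ≤ δ₂ / B := by
        have h1 : Real.log s - Real.log B = Real.log (s / B) :=
          (Real.log_div hspos.ne' hBpos.ne').symm
        have h2 : Real.log (s / B) ≤ s / B - 1 :=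
          Real.log_le_sub_one_of_pos (div_pos hspos hBpos)
        have h3 : s / B - 1 ≤ δ₂ / B := by
          rw [div_sub_one hBpos.ne']
          gcongr
          linarith
        linarith
      have hlog2 : Real.log A - Real.log t ≤ δ₂ / t := by
        have h1 : Real.log A - Real.log t = Real.log (A / t) :=
          (Real.log_div hApos.ne' htpos.ne').symm
        have h2 : Real.log (A / t) ≤ A / t - 1 :=
          Real.log_le_sub_one_of_pos (div_pos hApos htpos)
        have h3 : A / t - 1 ≤ δ₂ / t := by
          rw [div_sub_one htpos.ne']
          gcongr
          linarith
        linarith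
      have hk1 : δ₂ / B ≤ ε₂ / 2 := by
        rw [div_le_iff₀ hBpos]; nlinarith
      have hk2 : δ₂ / t ≤ ε₂ / 2 := by
        rw [div_le_iff₀ htpos]; nlinarith
      have hlogst : Real.log s - Real.log t ≤ M + ε₂ := by
        rw [hMdef]; linarith
      obtain ⟨P, Q, hP, hQ, hPQ⟩ := construct t s ht_mem hs_mem ε₁ hε₁pos
      have hBP : B₂ ≤ P := by rw [hB₂def]; exact coneB_le hP
      have hQA : Q ≤ A₂ := by
        rw [hA₂def]; exact le_coneA (cone_bddAboveA hC₂ (hL v hv) hP) hQ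
      have hQpos : 0 < Q := hQ.1
      have chain : Real.log B₂ - Real.log A₂ ≤ Real.log P - Real.log Q := by
        have l1 : Real.log B₂ ≤ Real.log P := Real.log_le_log hB₂pos hBP
        have l2 : Real.log Q ≤ Real.log A₂ := Real.log_le_log hQpos hQA
        linarith
      have hfac : (0:ℝ) ≤ 1 - Real.exp (-d) + ε₁ := by linarith
      have step2 : Real.log P - Real.log Q
          ≤ (1 - Real.exp (-d) + ε₁) * (M + ε₂) :=
        le_trans hPQ (mul_le_mul_of_nonneg_left hlogst hfac)
      have hexpand : (1 - Real.exp (-d) + ε₁) * (M + ε₂)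
          = (1 - Real.exp (-d)) * M + (1 - Real.exp (-d)) * ε₂ + ε₁ * M + ε₁ * ε₂ := by
        ring
      have hb1 : ε₁ * M ≤ ε / 3 - ε₁ := by nlinarith
      have hb2 : ε₁ * ε₂ ≤ ε₂ := by nlinarith
      have hb3 : (1 - Real.exp (-d)) * ε₂ ≤ ε₂ := by nlinarith
      have hcomb : (1 - Real.exp (-d) + ε₁) * (M + ε₂) ≤ (1 - Real.exp (-d)) * M + ε := by
        rw [hexpand]
        have he2 : ε₂ = ε / 3 := hε₂def
        linarith [hb1, hb2, hb3]
      linarith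
    have hfinal2 : Real.log B₂ - Real.log A₂ ≤ (1 - Real.exp (-d)) * M :=
      le_of_forall_sub_le fun ε hε => sub_le_iff_le_add.mpr (final ε hε)
    rw [hP2, hP1, ← ENNReal.ofReal_mul (show (0:ℝ) ≤ 1 - Real.exp (-d) by linarith)]
    exact ENNReal.ofReal_le_ofReal hfinal2
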